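/- Let κ : [0,2π] → ℝ be continuous and strictly positive with ∫₀^{2π} κ(θ)^{-1} dθ = L, and let A > 0 satisfy L² ≥ 4πA. Then for any n > 0, ∫₀^{2π} κ(θ)^{-(n+1)} dθ ≥ 2π (A/π)^{(n+1)/2}. -/

import Mathlib

open Real intervalIntegral

open MeasureTheory in
theorem curvature_integral_inequality
    (κ : ℝ → ℝ) (hκc : ContinuousOn κ (Set.Icc 0 (2 * π)))
    (hκpos : ∀ θ ∈ Set.Icc 0 (2 * π), 0 < κ θ)
    (L A : ℝ) (hA : 0 < A)
    (hLdef : L = ∫ θ in (0:ℝ)..(2 * π), (κ θ) ^ (-(1:ℝ)))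
    (hiso : L ^ 2 ≥ 4 * π * A)
    (n : ℝ) (hn : 0 < n) :
    (∫ θ in (0:ℝ)..(2 * π), (κ θ) ^ (-(n + 1))) ≥ 2 * π * (A / π) ^ ((n + 1) / 2) := by
  have hπ : (0:ℝ) < π := pi_pos
  have h2π : (0:ℝ) < 2 * π := by linarith
  set f : ℝ → ℝ := fun θ => (κ θ)⁻¹ with hf
  have hfc : ContinuousOn f (Set.Icc 0 (2*π)) :=
    hκc.inv₀ (fun x hx => (hκpos x hx).ne')
  have hsub := Set.Ioc_subset_Icc_self (a := (0:ℝ)) (b := 2*π)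
  have heq1 : ∀ θ ∈ Set.Icc 0 (2*π), (κ θ) ^ (-(1:ℝ)) = f θ := by
    intro θ hθ
    rw [Real.rpow_neg (hκpos θ hθ).le, Real.rpow_one]
  have heq2 : ∀ θ ∈ Set.Icc 0 (2*π), (κ θ) ^ (-(n+1)) = f θ ^ (n+1) := by
    intro θ hθ
    rw [Real.rpow_neg (hκpos θ hθ).le, hf]
    simp only
    rw [← Real.inv_rpow (hκpos θ hθ).le]
  -- L as integral of f over Ioc
  set μ : Measure ℝ := volume.restrict (Set.Ioc 0 (2*π)) with hμ
  haveI : IsFiniteMeasure μ := by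
    constructor
    rw [hμ, Measure.restrict_apply_univ]
    exact measure_Ioc_lt_top
  haveI : NeZero μ := by
    constructor
    rw [hμ, Ne, Measure.restrict_eq_zero, Real.volume_Ioc]
    simp only [ENNReal.ofReal_eq_zero, not_le]
    linarith
  have hμuniv : (μ Set.univ).toReal = 2 * π := by
    rw [hμ, Measure.restrict_apply_univ, Real.volume_Ioc]
    rw [ENNReal.toReal_ofReal (by linarith)]
    ring
  have hL1 : L = ∫ θ, f θ ∂μ := by
    rw [hLdef, intervalIntegral.integral_of_le h2π.le, hμ]
    exact setIntegral_congr_fun measurableSet_Ioc (fun x hx => heq1 x (hsub hx))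
  have hI : (∫ θ in (0:ℝ)..(2*π), (κ θ) ^ (-(n+1))) = ∫ θ, f θ ^ (n+1) ∂μ := by
    rw [intervalIntegral.integral_of_le h2π.le, hμ]
    exact setIntegral_congr_fun measurableSet_Ioc (fun x hx => heq2 x (hsub hx))
  -- integrability
  have hfi : Integrable f μ :=
    (hfc.integrableOn_Icc).mono_set hsub
  have hgc : ContinuousOn (fun x : ℝ => x ^ (n+1)) (Set.Ici 0) :=
    (Real.continuous_rpow_const (by linarith)).continuousOn
  have hgfc : ContinuousOn (fun θ => f θ ^ (n+1)) (Set.Icc 0 (2*π)) :=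
    hfc.rpow_const (fun x hx => Or.inr (by linarith))
  have hgi : Integrable ((fun x : ℝ => x ^ (n+1)) ∘ f) μ :=
    (hgfc.integrableOn_Icc).mono_set hsub
  have hfs : ∀ᵐ x ∂μ, f x ∈ Set.Ici (0:ℝ) := by
    rw [hμ]
    exact ae_restrict_of_forall_mem measurableSet_Ioc
      (fun x hx => (inv_pos.2 (hκpos x (hsub hx))).le)
  -- Jensen
  have hjensen := (convexOn_rpow (p := n+1) (by linarith)).map_average_le
    hgc isClosed_Ici hfs hfi hgi
  rw [average_eq, average_eq, measureReal_def, hμuniv, ← hL1, smul_eq_mul, smul_eq_mul] at hjensen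
  -- hjensen : ((2*π)⁻¹ * L) ^ (n+1) ≤ (2*π)⁻¹ * ∫ f^(n+1)
  have hL0 : 0 ≤ L := by
    rw [hLdef]
    exact intervalIntegral.integral_nonneg h2π.le
      (fun u hu => Real.rpow_nonneg (hκpos u hu).le _)
  have hLsqrt : Real.sqrt (4 * π * A) ≤ L := by
    calc Real.sqrt (4 * π * A) ≤ Real.sqrt (L ^ 2) := Real.sqrt_le_sqrt hiso
    _ = L := Real.sqrt_sq hL0
  have hkey : Real.sqrt (A / π) ≤ (2*π)⁻¹ * L := by
    have h4 : 4 * π * A = (2*π)^2 * (A / π) := by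
      field_simp; ring
    have : Real.sqrt (4 * π * A) = (2*π) * Real.sqrt (A / π) := by
      rw [h4, Real.sqrt_mul (by positivity), Real.sqrt_sq h2π.le]
    rw [inv_mul_eq_div, le_div_iff₀ h2π]
    rw [this] at hLsqrt
    linarith
  have hrw : 2 * π * (A / π) ^ ((n + 1) / 2) = 2 * π * (Real.sqrt (A / π)) ^ (n+1) := by
    rw [Real.sqrt_eq_rpow, ← Real.rpow_mul (by positivity)]
    ring_nf
  rw [ge_iff_le, hI, hrw]
  calc 2 * π * Real.sqrt (A / π) ^ (n + 1)
      ≤ 2 * π * ((2*π)⁻¹ * L) ^ (n+1) := by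
        apply mul_le_mul_of_nonneg_left _ h2π.le
        exact Real.rpow_le_rpow (Real.sqrt_nonneg _) hkey (by linarith)
    _ ≤ 2 * π * ((2*π)⁻¹ * ∫ θ, f θ ^ (n+1) ∂μ) :=
        mul_le_mul_of_nonneg_left hjensen h2π.le
    _ = ∫ θ, f θ ^ (n+1) ∂μ := by
        field_simp
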